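/- Let A = (a_1,…,a_K) and B = (b_1,…,b_K) be two lists of K distinct items from E such that a_i = b_j only if i = j, and let (w(e))_{e∈E} be mutually independent Bernoulli random variables with means w̄(e). Then E[∏_{k=1}^K (1 − w(a_k)) − ∏_{k=1}^K (1 − w(b_k))] = Σ_{k=1}^K (w̄(b_k) − w̄(a_k)) · P(w(a_1) = ⋯ = w(a_{k−1}) = 0) · ∏_{j=k+1}^K (1 − w̄(b_j)). -/

import Mathlib

set_option maxRecDepth 10000
open MeasureTheory ProbabilityTheory Finset

/-- Telescoping identity over `ℕ`. -/
lemma telescope_nat (n : ℕ) (x y : ℕ → ℝ) :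
    (∏ i ∈ Finset.range n, x i) - ∏ i ∈ Finset.range n, y i =
      ∑ k ∈ Finset.range n,
        (x k - y k) * (∏ i ∈ Finset.range k, x i) * ∏ j ∈ Finset.Ico (k + 1) n, y j := by
  have h := Finset.sum_range_sub
    (f := fun k => (∏ i ∈ Finset.range k, x i) * ∏ j ∈ Finset.Ico k n, y j) n
  have h0 : (∏ i ∈ Finset.range n, x i) * ∏ j ∈ Finset.Ico n n, y j
      - (∏ i ∈ Finset.range 0, x i) * ∏ j ∈ Finset.Ico 0 n, y j
      = (∏ i ∈ Finset.range n, x i) - ∏ i ∈ Finset.range n, y i := by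
    rw [Finset.Ico_self, Finset.prod_empty, Finset.range_zero, Finset.prod_empty, mul_one, one_mul, ← Finset.range_eq_Ico]
  rw [← h0, ← h]
  refine Finset.sum_congr rfl fun k hk => ?_
  have hkn : k < n := Finset.mem_range.mp hk
  rw [Finset.prod_range_succ, Finset.prod_eq_prod_Ico_succ_bot hkn y]
  ring

lemma prod_filter_lt_eq {K : ℕ} (k : Fin K) (X : ℕ → ℝ) :
    ∏ i ∈ Finset.univ.filter (fun i : Fin K => i < k), X (i : ℕ) =
      ∏ i ∈ Finset.range (k : ℕ), X i := by
  refine Finset.prod_bij (fun (i : Fin K) _ => (i : ℕ)) ?_ ?_ ?_ ?_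
  · intro i hi
    simp only [Finset.mem_filter] at hi
    exact Finset.mem_range.mpr hi.2
  · intro i _ j _ h
    exact Fin.val_injective h
  · intro j hj
    have hjk : j < (k : ℕ) := Finset.mem_range.mp hj
    exact ⟨⟨j, hjk.trans k.isLt⟩, Finset.mem_filter.mpr ⟨Finset.mem_univ _,
      Fin.lt_def.mpr hjk⟩, rfl⟩
  · intro i _; rfl

lemma prod_filter_gt_eq {K : ℕ} (k : Fin K) (X : ℕ → ℝ) :
    ∏ j ∈ Finset.univ.filter (fun j : Fin K => k < j), X (j : ℕ) =
      ∏ j ∈ Finset.Ico ((k : ℕ) + 1) K, X j := by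
  refine Finset.prod_bij (fun (j : Fin K) _ => (j : ℕ)) ?_ ?_ ?_ ?_
  · intro j hj
    simp only [Finset.mem_filter] at hj
    exact Finset.mem_Ico.mpr ⟨hj.2, j.isLt⟩
  · intro i _ j _ h
    exact Fin.val_injective h
  · intro j hj
    obtain ⟨h1, h2⟩ := Finset.mem_Ico.mp hj
    exact ⟨⟨j, h2⟩, Finset.mem_filter.mpr ⟨Finset.mem_univ _,
      Fin.lt_def.mpr (Nat.lt_of_succ_le h1)⟩, rfl⟩
  · intro i _; rfl

lemma telescope_fin {K : ℕ} (x y : Fin K → ℝ) :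
    (∏ k : Fin K, x k) - ∏ k : Fin K, y k =
      ∑ k : Fin K,
        (x k - y k) * (∏ i ∈ Finset.univ.filter (fun i => i < k), x i) *
          ∏ j ∈ Finset.univ.filter (fun j => k < j), y j := by
  classical
  set X : ℕ → ℝ := fun i => if h : i < K then x ⟨i, h⟩ else 1 with hXdef
  set Y : ℕ → ℝ := fun i => if h : i < K then y ⟨i, h⟩ else 1 with hYdef
  have hX : ∀ i : Fin K, X (i : ℕ) = x i := fun i => by
    show (if h : (i : ℕ) < K then x ⟨i, h⟩ else 1) = x i
    rw [dif_pos i.isLt, Fin.eta]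
  have hY : ∀ i : Fin K, Y (i : ℕ) = y i := fun i => by
    show (if h : (i : ℕ) < K then y ⟨i, h⟩ else 1) = y i
    rw [dif_pos i.isLt, Fin.eta]
  have hx : (∏ k : Fin K, x k) = ∏ i ∈ Finset.range K, X i := by
    rw [← Fin.prod_univ_eq_prod_range]
    exact Finset.prod_congr rfl fun i _ => (hX i).symm
  have hy : (∏ k : Fin K, y k) = ∏ i ∈ Finset.range K, Y i := by
    rw [← Fin.prod_univ_eq_prod_range]
    exact Finset.prod_congr rfl fun i _ => (hY i).symm
  rw [hx, hy, telescope_nat K X Y, ← Fin.sum_univ_eq_sum_range]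
  refine Finset.sum_congr rfl fun k _ => ?_
  rw [hX k, hY k, ← prod_filter_lt_eq k X, ← prod_filter_gt_eq k Y]
  congr 1
  · congr 1
    exact Finset.prod_congr rfl fun i _ => hX i
  · exact Finset.prod_congr rfl fun j _ => hY j

lemma integral_prod_indep {E : Type*} {Ω : Type*} [MeasurableSpace Ω]
    (μ : Measure Ω) [IsProbabilityMeasure μ]
    (f : E → Ω → ℝ)
    (hindep : iIndepFun (m := fun _ : E => Real.measurableSpace) f μ)
    (hfmeas : ∀ e, Measurable (f e)) (S : Finset E) :
    (∫ ω, ∏ e ∈ S, f e ω ∂μ) = ∏ e ∈ S, ∫ ω, f e ω ∂μ := by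
  classical
  induction S using Finset.cons_induction with
  | empty => simp
  | cons e S he ih =>
    have hprodmeas : Measurable fun ω => ∏ e' ∈ S, f e' ω :=
      Finset.measurable_prod S fun i _ => hfmeas i
    have hind : IndepFun (f e) (fun ω => ∏ e' ∈ S, f e' ω) μ := by
      have h := hindep.indepFun_finsetProd_of_notMem hfmeas he
      have heq : (∏ j ∈ S, f j) = fun ω => ∏ e' ∈ S, f e' ω := by
        funext ω; exact Finset.prod_apply ω S f
      rw [heq] at h
      exact h.symm
    calc ∫ ω, ∏ e' ∈ Finset.cons e S he, f e' ω ∂μ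
        = ∫ ω, f e ω * ∏ e' ∈ S, f e' ω ∂μ := by
          simp only [Finset.prod_cons]
      _ = (∫ ω, f e ω ∂μ) * ∫ ω, ∏ e' ∈ S, f e' ω ∂μ :=
          hind.integral_mul_eq_mul_integral (hfmeas e).aestronglyMeasurable hprodmeas.aestronglyMeasurable
      _ = ∏ e' ∈ Finset.cons e S he, ∫ ω, f e' ω ∂μ := by
          rw [ih, Finset.prod_cons]

lemma integral_prod_one_sub {E : Type*} {Ω : Type*} [MeasurableSpace Ω]
    (μ : Measure Ω) [IsProbabilityMeasure μ]
    (w : E → Ω → ℝ)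
    (hindep : iIndepFun (m := fun _ : E => Real.measurableSpace) w μ)
    (hmeas : ∀ e, Measurable (w e))
    (hint : ∀ e, Integrable (w e) μ) (S : Finset E) :
    (∫ ω, ∏ e ∈ S, (1 - w e ω) ∂μ) = ∏ e ∈ S, (1 - ∫ ω, w e ω ∂μ) := by
  have hfind : iIndepFun (m := fun _ : E => Real.measurableSpace)
      (fun e => (fun x : ℝ => 1 - x) ∘ w e) μ :=
    hindep.comp _ (fun _ => measurable_const.sub measurable_id)
  have key := integral_prod_indep μ (fun e => (fun x : ℝ => 1 - x) ∘ w e) hfind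
    (fun e => (measurable_const.sub measurable_id).comp (hmeas e)) S
  simp only [Function.comp_apply] at key
  rw [key]
  refine Finset.prod_congr rfl fun e _ => ?_
  rw [integral_sub (integrable_const 1) (hint e), integral_const]
  simp

lemma integral_mul_prod_indep {E : Type*} {Ω : Type*} [MeasurableSpace Ω]
    (μ : Measure Ω) [IsProbabilityMeasure μ]
    (w : E → Ω → ℝ)
    (hindep : iIndepFun (m := fun _ : E => Real.measurableSpace) w μ)
    (hmeas : ∀ e, Measurable (w e))
    (hint : ∀ e, Integrable (w e) μ)
    (c : E) (S : Finset E) (hc : c ∉ S) :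
    (∫ ω, w c ω * ∏ e ∈ S, (1 - w e ω) ∂μ)
      = (∫ ω, w c ω ∂μ) * ∏ e ∈ S, (1 - ∫ ω, w e ω ∂μ) := by
  classical
  set g : E → ℝ → ℝ := fun e => if e = c then id else fun x => 1 - x with hg
  set f : E → Ω → ℝ := fun e => g e ∘ w e with hf
  have hgmeas : ∀ e, Measurable (g e) := fun e => by
    by_cases h : e = c
    · simpa [hg, h] using measurable_id
    · simpa [hg, h] using (by fun_prop : Measurable fun x : ℝ => 1 - x)
  have hfind : iIndepFun (m := fun _ : E => Real.measurableSpace) f μ := hindep.comp g hgmeas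
  have hfmeas : ∀ e, Measurable (f e) := fun e => (hgmeas e).comp (hmeas e)
  have key := integral_prod_indep μ f hfind hfmeas (insert c S)
  have hfc : ∀ ω, f c ω = w c ω := fun ω => by simp [hf, hg]
  have hfe : ∀ e ∈ S, ∀ ω, f e ω = 1 - w e ω := fun e heS ω => by
    have hne : e ≠ c := fun h => hc (h ▸ heS)
    simp [hf, hg, hne]
  have h1 : (∫ ω, ∏ e ∈ insert c S, f e ω ∂μ)
      = ∫ ω, w c ω * ∏ e ∈ S, (1 - w e ω) ∂μ := by
    refine integral_congr_ae (Filter.Eventually.of_forall fun ω => ?_)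
    show (∏ e ∈ insert c S, f e ω) = w c ω * ∏ e ∈ S, (1 - w e ω)
    rw [Finset.prod_insert hc, hfc]
    exact congrArg _ (Finset.prod_congr rfl fun e he => hfe e he ω)
  have h2 : ∀ e ∈ S, (∫ ω, f e ω ∂μ) = 1 - ∫ ω, w e ω ∂μ := fun e heS => by
    rw [show (∫ ω, f e ω ∂μ) = ∫ ω, (1 : ℝ) - w e ω ∂μ from
      integral_congr_ae (Filter.Eventually.of_forall fun ω => hfe e heS ω)]
    rw [integral_sub (integrable_const 1) (hint e), integral_const]
    simp
  rw [← h1, key, Finset.prod_insert hc]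
  rw [show (∫ ω, f c ω ∂μ) = ∫ ω, w c ω ∂μ from
    integral_congr_ae (Filter.Eventually.of_forall hfc)]
  exact congrArg _ (Finset.prod_congr rfl h2)

lemma habsP {ι : Type*} (s : Finset ι) (f : ι → ℝ)
    (h : ∀ i ∈ s, |f i| ≤ 1) : |∏ i ∈ s, f i| ≤ 1 := by
  rw [Finset.abs_prod]
  exact Finset.prod_le_one (fun i _ => abs_nonneg _) h

/-- for two lists `A = (a_1, …, a_K)` and `B = (b_1, …, b_K)` of distinct
items with `a_i = b_j` only if `i = j`, and mutually independent Bernoulli random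
variables `(w(e))_{e ∈ E}` with means `w̄(e) ∈ [0,1]`,
`E[∏_k (1 − w(a_k)) − ∏_k (1 − w(b_k))]
  = Σ_k (w̄(b_k) − w̄(a_k)) · P(w(a_1) = ⋯ = w(a_{k−1}) = 0) · ∏_{j>k} (1 − w̄(b_j))`. -/
theorem regret_decomposition_identity {E : Type*} [Fintype E]
    {Ω : Type*} [MeasurableSpace Ω] (μ : Measure Ω) [IsProbabilityMeasure μ]
    (K : ℕ) (a b : Fin K → E)
    (ha : Function.Injective a) (hb : Function.Injective b)
    (hab : ∀ i j : Fin K, a i = b j → i = j)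
    (w : E → Ω → ℝ) (wbar : E → ℝ)
    (hmeas : ∀ e, Measurable (w e))
    (hbin : ∀ e ω, w e ω = 0 ∨ w e ω = 1)
    (hmean : ∀ e, (∫ ω, w e ω ∂μ) = wbar e)
    (hw01 : ∀ e, wbar e ∈ Set.Icc (0 : ℝ) 1)
    (hindep : iIndepFun (m := fun _ : E => Real.measurableSpace) w μ) :
    (∫ ω, ((∏ k : Fin K, (1 - w (a k) ω)) - ∏ k : Fin K, (1 - w (b k) ω)) ∂μ) =
      ∑ k : Fin K,
        (wbar (b k) - wbar (a k)) *
          (μ {ω | ∀ i : Fin K, i < k → w (a i) ω = 0}).toReal *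
          (∏ j ∈ Finset.univ.filter (fun j : Fin K => k < j), (1 - wbar (b j))) := by
  classical
  -- integrability of the w's
  have hint : ∀ e, Integrable (w e) μ := fun e =>
    (integrable_const (1 : ℝ)).mono' (hmeas e).aestronglyMeasurable
      (Filter.Eventually.of_forall fun ω => by
        rcases hbin e ω with h | h <;> simp [h])
  have hone : ∀ e ω, |1 - w e ω| ≤ 1 := fun e ω => by
    rcases hbin e ω with h | h <;> simp [h]
  have habsw : ∀ e ω, |w e ω| ≤ 1 := fun e ω => by
    rcases hbin e ω with h | h <;> simp [h]
  -- the item finsets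
  set A : Fin K → Finset E :=
    fun k => (Finset.univ.filter (fun i : Fin K => i < k)).image a with hA
  set B : Fin K → Finset E :=
    fun k => (Finset.univ.filter (fun j : Fin K => k < j)).image b with hB
  have hPA : ∀ (g : E → ℝ) (k : Fin K),
      (∏ e ∈ A k, g e) = ∏ i ∈ Finset.univ.filter (fun i : Fin K => i < k), g (a i) :=
    fun g k => Finset.prod_image (fun i _ j _ h => ha h)
  have hPB : ∀ (g : E → ℝ) (k : Fin K),
      (∏ e ∈ B k, g e) = ∏ j ∈ Finset.univ.filter (fun j : Fin K => k < j), g (b j) :=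
    fun g k => Finset.prod_image (fun i _ j _ h => hb h)
  have hdisj : ∀ k, Disjoint (A k) (B k) := fun k => by
    rw [Finset.disjoint_left]
    intro e heA heB
    obtain ⟨i, hi, hie⟩ := Finset.mem_image.mp heA
    obtain ⟨j, hj, hje⟩ := Finset.mem_image.mp heB
    have hik := (Finset.mem_filter.mp hi).2
    have hkj := (Finset.mem_filter.mp hj).2
    have hij : i = j := hab i j (hie.trans hje.symm)
    exact absurd (hik.trans hkj) (by rw [hij]; exact lt_irrefl j)
  have hamem : ∀ k, a k ∉ A k ∪ B k := by
    intro k hk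
    rcases Finset.mem_union.mp hk with h | h
    · obtain ⟨i, hi, hie⟩ := Finset.mem_image.mp h
      have hik := ha hie
      exact absurd ((Finset.mem_filter.mp hi).2) (by rw [hik]; exact lt_irrefl k)
    · obtain ⟨j, hj, hje⟩ := Finset.mem_image.mp h
      have hkj := hab k j hje.symm
      exact absurd ((Finset.mem_filter.mp hj).2) (by rw [← hkj]; exact lt_irrefl k)
  have hbmem : ∀ k, b k ∉ A k ∪ B k := by
    intro k hk
    rcases Finset.mem_union.mp hk with h | h
    · obtain ⟨i, hi, hie⟩ := Finset.mem_image.mp h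
      have hik := hab i k hie
      exact absurd ((Finset.mem_filter.mp hi).2) (by rw [hik]; exact lt_irrefl k)
    · obtain ⟨j, hj, hje⟩ := Finset.mem_image.mp h
      have hkj := hb hje
      exact absurd ((Finset.mem_filter.mp hj).2) (by rw [hkj]; exact lt_irrefl k)
  -- pointwise telescoping
  have hpt : ∀ ω, ((∏ k : Fin K, (1 - w (a k) ω)) - ∏ k : Fin K, (1 - w (b k) ω))
      = ∑ k : Fin K, (w (b k) ω - w (a k) ω) *
          (∏ i ∈ Finset.univ.filter (fun i => i < k), (1 - w (a i) ω)) *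
          ∏ j ∈ Finset.univ.filter (fun j => k < j), (1 - w (b j) ω) := fun ω => by
    rw [telescope_fin (fun k => 1 - w (a k) ω) (fun k => 1 - w (b k) ω)]
    exact Finset.sum_congr rfl fun k _ => by ring
  -- integrability of each summand
  have hTint : ∀ k : Fin K, Integrable (fun ω => (w (b k) ω - w (a k) ω) *
      (∏ i ∈ Finset.univ.filter (fun i => i < k), (1 - w (a i) ω)) *
      ∏ j ∈ Finset.univ.filter (fun j => k < j), (1 - w (b j) ω)) μ := by
    intro k
    refine (integrable_const (1 : ℝ)).mono' ?_ (Filter.Eventually.of_forall fun ω => ?_)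
    · exact (((hmeas (b k)).sub (hmeas (a k))).mul
        (Finset.measurable_prod _ fun i _ => measurable_const.sub (hmeas _))).mul
        (Finset.measurable_prod _ fun j _ => measurable_const.sub (hmeas _))
        |>.aestronglyMeasurable
    · have hd : |w (b k) ω - w (a k) ω| ≤ 1 := by
        rcases hbin (b k) ω with h1 | h1 <;> rcases hbin (a k) ω with h2 | h2 <;>
          simp [h1, h2]
      rw [Real.norm_eq_abs, abs_mul, abs_mul]
      exact mul_le_one₀
        (mul_le_one₀ hd (abs_nonneg _) (habsP _ _ fun i _ => hone _ ω))
        (abs_nonneg _) (habsP _ _ fun j _ => hone _ ω)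
  -- integrability of w c · ∏ (1 - w e)
  have hintc : ∀ (c : E) (S : Finset E),
      Integrable (fun ω => w c ω * ∏ e ∈ S, (1 - w e ω)) μ := fun c S => by
    refine (integrable_const (1 : ℝ)).mono' ?_ (Filter.Eventually.of_forall fun ω => ?_)
    · exact ((hmeas c).mul
        (Finset.measurable_prod _ fun e _ => measurable_const.sub (hmeas e))).aestronglyMeasurable
    · rw [Real.norm_eq_abs, abs_mul]
      exact mul_le_one₀ (habsw c ω) (abs_nonneg _) (habsP _ _ fun e _ => hone e ω)
  -- the probability as a product
  have hμk : ∀ k : Fin K, (μ {ω | ∀ i : Fin K, i < k → w (a i) ω = 0}).toReal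
      = ∏ i ∈ Finset.univ.filter (fun i : Fin K => i < k), (1 - wbar (a i)) := by
    intro k
    set s : Set Ω := {ω | ∀ i : Fin K, i < k → w (a i) ω = 0} with hs
    have hsm : MeasurableSet s := by
      have hseq : s = ⋂ (i : Fin K), ⋂ (_ : i < k), (w (a i)) ⁻¹' {0} := by
        ext ω; simp [hs, Set.mem_iInter]
      rw [hseq]
      exact MeasurableSet.iInter fun i =>
        MeasurableSet.iInter fun _ => (hmeas _) (measurableSet_singleton 0)
    have hindic : ∀ ω, s.indicator (1 : Ω → ℝ) ω
        = ∏ i ∈ Finset.univ.filter (fun i : Fin K => i < k), (1 - w (a i) ω) := by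
      intro ω
      by_cases h : ω ∈ s
      · rw [Set.indicator_of_mem h]
        symm
        refine Finset.prod_eq_one fun i hi => ?_
        rw [h i (Finset.mem_filter.mp hi).2, sub_zero]
      · rw [Set.indicator_of_notMem h]
        symm
        simp only [hs, Set.mem_setOf_eq, not_forall] at h
        obtain ⟨i, hik, hne⟩ := h
        refine Finset.prod_eq_zero (Finset.mem_filter.mpr ⟨Finset.mem_univ _, hik⟩) ?_
        rw [(hbin _ ω).resolve_left hne, sub_self]
    calc (μ s).toReal = ∫ ω, s.indicator (1 : Ω → ℝ) ω ∂μ := (integral_indicator_one hsm).symm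
      _ = ∫ ω, ∏ e ∈ A k, (1 - w e ω) ∂μ :=
          integral_congr_ae (Filter.Eventually.of_forall fun ω => by
            rw [hindic ω]; exact (hPA (fun e => 1 - w e ω) k).symm)
      _ = ∏ e ∈ A k, (1 - ∫ ω, w e ω ∂μ) :=
          integral_prod_one_sub μ w hindep hmeas hint (A k)
      _ = ∏ i ∈ Finset.univ.filter (fun i : Fin K => i < k), (1 - wbar (a i)) := by
          simp only [hmean]
          exact hPA (fun e => 1 - wbar e) k
  -- main computation
  rw [show (∫ ω, ((∏ k : Fin K, (1 - w (a k) ω)) - ∏ k : Fin K, (1 - w (b k) ω)) ∂μ)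
      = ∫ ω, ∑ k : Fin K, (w (b k) ω - w (a k) ω) *
          (∏ i ∈ Finset.univ.filter (fun i => i < k), (1 - w (a i) ω)) *
          ∏ j ∈ Finset.univ.filter (fun j => k < j), (1 - w (b j) ω) ∂μ from
      integral_congr_ae (Filter.Eventually.of_forall fun ω => hpt ω)]
  rw [integral_finset_sum _ (fun k _ => hTint k)]
  refine Finset.sum_congr rfl fun k _ => ?_
  rw [hμk k]
  have hTk : ∀ ω, (w (b k) ω - w (a k) ω) *
      (∏ i ∈ Finset.univ.filter (fun i => i < k), (1 - w (a i) ω)) *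
      (∏ j ∈ Finset.univ.filter (fun j => k < j), (1 - w (b j) ω))
      = w (b k) ω * ∏ e ∈ A k ∪ B k, (1 - w e ω)
        - w (a k) ω * ∏ e ∈ A k ∪ B k, (1 - w e ω) := fun ω => by
    rw [Finset.prod_union (hdisj k), hPA (fun e => 1 - w e ω) k, hPB (fun e => 1 - w e ω) k]
    ring
  calc (∫ ω, (w (b k) ω - w (a k) ω) *
        (∏ i ∈ Finset.univ.filter (fun i => i < k), (1 - w (a i) ω)) *
        ∏ j ∈ Finset.univ.filter (fun j => k < j), (1 - w (b j) ω) ∂μ)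
      = ∫ ω, (w (b k) ω * ∏ e ∈ A k ∪ B k, (1 - w e ω)
          - w (a k) ω * ∏ e ∈ A k ∪ B k, (1 - w e ω)) ∂μ :=
        integral_congr_ae (Filter.Eventually.of_forall fun ω => hTk ω)
    _ = (∫ ω, w (b k) ω * ∏ e ∈ A k ∪ B k, (1 - w e ω) ∂μ)
          - ∫ ω, w (a k) ω * ∏ e ∈ A k ∪ B k, (1 - w e ω) ∂μ :=
        integral_sub (hintc _ _) (hintc _ _)
    _ = wbar (b k) * ∏ e ∈ A k ∪ B k, (1 - wbar e)
          - wbar (a k) * ∏ e ∈ A k ∪ B k, (1 - wbar e) := by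
        rw [integral_mul_prod_indep μ w hindep hmeas hint (b k) _ (hbmem k),
          integral_mul_prod_indep μ w hindep hmeas hint (a k) _ (hamem k)]
        simp only [hmean]
    _ = (wbar (b k) - wbar (a k)) *
          (∏ i ∈ Finset.univ.filter (fun i : Fin K => i < k), (1 - wbar (a i))) *
          ∏ j ∈ Finset.univ.filter (fun j : Fin K => k < j), (1 - wbar (b j)) := by
        rw [Finset.prod_union (hdisj k), hPA (fun e => 1 - wbar e) k,
          hPB (fun e => 1 - wbar e) k]
        ring
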